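/- Let H be the vertex set of a convex hexagon in the plane (6 points in convex position). Any set X of points blocking all 15 open segments determined by pairs of vertices of H (i.e., every open segment between two vertices of H contains a point of X) has at least 10 points. -/

import Mathlib

open scoped Classical

abbrev Pt := ℝ × ℝ

/-- `u` and `v` are mutually visible within `X`: they are distinct and the open
segment between them contains no point of `X`. -/
def Visible (X : Finset Pt) (u v : Pt) : Prop :=
  u ≠ v ∧ ∀ p ∈ X, p ∉ openSegment ℝ u v

/-- A coloring is proper for the visibility graph of `X`: any two distinct
same-colored points of `X` are blocked by some point of `X` on the open
segment between them. -/
def ProperColoring {α : Type*} (X : Finset Pt) (c : Pt → α) : Prop :=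
  ∀ u ∈ X, ∀ v ∈ X, u ≠ v → c u = c v → ∃ p ∈ X, p ∈ openSegment ℝ u v

/-- `X` has at most 3 collinear points. -/
def AtMost3Collinear (X : Finset Pt) : Prop :=
  ∀ S : Finset Pt, S ⊆ X → Collinear ℝ (S : Set Pt) → S.card ≤ 3

/-- A finite set is in (strictly) convex position. -/
def ConvexPos (H : Finset Pt) : Prop :=
  ∀ p ∈ H, p ∉ convexHull ℝ ((H.erase p : Finset Pt) : Set Pt)

/-- Orientation (twice signed area) of a triple of planar points. -/
def sig (a b c : Pt) : ℝ := (b.1 - a.1) * (c.2 - a.2) - (b.2 - a.2) * (c.1 - a.1)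

lemma sig_cycle (a b c : Pt) : sig a b c = sig b c a := by unfold sig; ring

lemma sig_swap (a b c : Pt) : sig a b c = - sig a c b := by unfold sig; ring

/-- Coordinates of open segment membership. -/
lemma mem_open_iff {x a b : Pt} :
    x ∈ openSegment ℝ a b ↔ ∃ t : ℝ, 0 < t ∧ t < 1 ∧ x = (1 - t) • a + t • b := by
  rw [openSegment_eq_image]
  constructor
  · rintro ⟨t, ⟨ht0, ht1⟩, rfl⟩; exact ⟨t, ht0, ht1, rfl⟩
  · rintro ⟨t, ht0, ht1, rfl⟩; exact ⟨t, ⟨ht0, ht1⟩, rfl⟩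

lemma smul_coords (t : ℝ) (a b : Pt) :
    ((1 - t) • a + t • b) = ((1-t)*a.1 + t*b.1, (1-t)*a.2 + t*b.2) := by
  simp [Prod.ext_iff, Prod.smul_def]

/-- A point on the open segment `ab` has zero orientation with `a,b`. -/
lemma sig_of_mem {p a b : Pt} (h : p ∈ openSegment ℝ a b) : sig a b p = 0 := by
  rw [mem_open_iff] at h
  obtain ⟨t, _, _, rfl⟩ := h
  rw [smul_coords]; unfold sig; dsimp only; ring

/-- `sig a b ·` is affine along a segment. -/
lemma sig_affine (a b c d : Pt) (t : ℝ) :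
    sig a b ((1 - t) • c + t • d) = (1 - t) * sig a b c + t * sig a b d := by
  rw [smul_coords]; unfold sig; dsimp only; ring

/-- Two open segments from a common endpoint that share a point give collinearity. -/
lemma sig_zero_of_common {p a b c : Pt} (h1 : p ∈ openSegment ℝ a b)
    (h2 : p ∈ openSegment ℝ a c) : sig a b c = 0 := by
  rw [mem_open_iff] at h1 h2
  obtain ⟨t, ht0, _, rfl⟩ := h1
  obtain ⟨s, hs0, _, he⟩ := h2
  rw [smul_coords, smul_coords] at he
  have h1 : (1-t)*a.1 + t*b.1 = (1-s)*a.1 + s*c.1 := congrArg Prod.fst he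
  have h2 : (1-t)*a.2 + t*b.2 = (1-s)*a.2 + s*c.2 := congrArg Prod.snd he
  have hs : s ≠ 0 := ne_of_gt hs0
  have ht : t ≠ 0 := ne_of_gt ht0
  have key : t * (s * sig a b c) = 0 := by
    unfold sig
    linear_combination (s*(c.2 - a.2)) * h1 - (s*(c.1 - a.1)) * h2
  rcases mul_eq_zero.mp key with h | h
  · exact absurd h ht
  · rcases mul_eq_zero.mp h with h | h
    · exact absurd h hs
    · exact h

/-- If a point is on both open segments `ab` and `cd`, then `c` and `d` have
orientations with `a b` of opposite sign (product negative) unless both are zero... 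
Actually: product is `≤ 0`, and `= 0` only if both are zero. We state: -/
lemma opp_sides {p a b c d : Pt} (h1 : p ∈ openSegment ℝ a b)
    (h2 : p ∈ openSegment ℝ c d) (hc : sig a b c ≠ 0) :
    sig a b c * sig a b d < 0 := by
  have h0 : sig a b p = 0 := sig_of_mem h1
  rw [mem_open_iff] at h2
  obtain ⟨t, ht0, ht1, rfl⟩ := h2
  rw [sig_affine] at h0
  rcases lt_or_gt_of_ne hc with h | h
  · have : 0 < sig a b d := by nlinarith
    nlinarith
  · have : sig a b d < 0 := by nlinarith
    nlinarith

lemma comb_mem_hull {y z : Pt} {s : Set Pt} (hy : y ∈ s) (hz : z ∈ s) {μ : ℝ}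
    (h0 : 0 ≤ μ) (h1 : μ ≤ 1) : (1-μ) • y + μ • z ∈ convexHull ℝ s :=
  (convex_convexHull ℝ s) (subset_convexHull ℝ s hy) (subset_convexHull ℝ s hz)
    (by linarith) h0 (by ring)

lemma mid_mem_hull {x y z : Pt} {μ : ℝ} (h0 : 0 ≤ μ) (h1 : μ ≤ 1)
    (hx1 : x.1 = (1-μ)*y.1 + μ*z.1) (hx2 : x.2 = (1-μ)*y.2 + μ*z.2)
    {s : Set Pt} (hy : y ∈ s) (hz : z ∈ s) : x ∈ convexHull ℝ s := by
  have hx : x = (1-μ) • y + μ • z := by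
    apply Prod.ext
    · simpa using hx1
    · simpa using hx2
  rw [hx]; exact comb_mem_hull hy hz h0 h1

lemma mem_erase_coe {H : Finset Pt} {a b : Pt} (hb : b ∈ H) (hne : b ≠ a) :
    b ∈ ((H.erase a : Finset Pt) : Set Pt) :=
  Finset.mem_coe.mpr (Finset.mem_erase.mpr ⟨hne, hb⟩)

/-- No three distinct points of a set in convex position are collinear. -/
lemma sig_ne_zero {H : Finset Pt} (hconv : ConvexPos H) {a b c : Pt}
    (ha : a ∈ H) (hb : b ∈ H) (hc : c ∈ H)
    (hab : a ≠ b) (hac : a ≠ c) (hbc : b ≠ c) : sig a b c ≠ 0 := by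
  intro hs
  obtain ⟨t, ht1, ht2⟩ : ∃ t : ℝ, c.1 - a.1 = t*(b.1-a.1) ∧ c.2 - a.2 = t*(b.2-a.2) := by
    by_cases hb1 : b.1 = a.1
    · have hb2 : b.2 ≠ a.2 := by
        intro h2; exact hab (Prod.ext hb1 h2).symm
      have hb1' : b.1 - a.1 = 0 := by linarith
      have hc1 : c.1 - a.1 = 0 := by
        have h0 : (b.2-a.2)*(c.1-a.1) = 0 := by
          unfold sig at hs; linear_combination -hs + (c.2-a.2)*hb1'
        rcases mul_eq_zero.mp h0 with h | h
        · exact absurd (by linarith) hb2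
        · exact h
      refine ⟨(c.2-a.2)/(b.2-a.2), by rw [hb1', hc1]; ring, ?_⟩
      rw [div_mul_cancel₀ _ (sub_ne_zero_of_ne hb2)]
    · have hb1' : b.1 - a.1 ≠ 0 := sub_ne_zero_of_ne hb1
      refine ⟨(c.1-a.1)/(b.1-a.1), by rw [div_mul_cancel₀ _ hb1'], ?_⟩
      field_simp
      unfold sig at hs
      linear_combination hs
  have ht0 : t ≠ 0 := by
    rintro rfl; exact hac (Prod.ext (by linarith) (by linarith))
  have htne1 : t ≠ 1 := by
    rintro rfl; exact hbc (Prod.ext (by linarith) (by linarith))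
  rcases lt_trichotomy t 0 with h | h | h
  · -- a between b and c
    refine hconv a ha ?_
    have h1t : (0:ℝ) < 1 - t := by linarith
    refine mid_mem_hull (μ := 1/(1-t)) (by positivity)
      (by rw [div_le_one h1t]; linarith) ?_ ?_
      (mem_erase_coe hb hab.symm) (mem_erase_coe hc hac.symm)
    · field_simp; linear_combination -ht1
    · field_simp; linear_combination -ht2
  · exact ht0 h
  · rcases lt_trichotomy t 1 with h1 | h1 | h1
    · -- c between a and b
      refine hconv c hc ?_
      refine mid_mem_hull (μ := t) (by linarith) (by linarith) (by linarith) (by linarith)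
        (mem_erase_coe ha hac) (mem_erase_coe hb hbc)
    · exact htne1 h1
    · -- b between a and c
      refine hconv b hb ?_
      have ht0' : (0:ℝ) < t := by linarith
      refine mid_mem_hull (μ := 1/t) (by positivity)
        (by rw [div_le_one ht0']; linarith) ?_ ?_
        (mem_erase_coe ha hab) (mem_erase_coe hc hbc.symm)
      · field_simp; linear_combination -ht1
      · field_simp; linear_combination -ht2

lemma sig_oo (a b : Pt) : sig a a b = 0 := by unfold sig; ring
lemma sig_obo (a b : Pt) : sig a b a = 0 := by unfold sig; ring
lemma sig_obb (a b : Pt) : sig a b b = 0 := by unfold sig; ring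

/-- Key convexity step: orientations around `o` propagate to triples. -/
lemma sig_pos_of_chain {H : Finset Pt} (hconv : ConvexPos H) {o a b c : Pt}
    (ho : o ∈ H) (ha : a ∈ H) (hb : b ∈ H) (hc : c ∈ H)
    (h1 : 0 < sig o a b) (h2 : 0 < sig o b c) (h3 : 0 < sig o a c) :
    0 < sig a b c := by
  have hoa : o ≠ a := fun h => by rw [h] at h1; rw [sig_oo] at h1; exact lt_irrefl 0 h1
  have hob : o ≠ b := fun h => by rw [h] at h2; rw [sig_oo] at h2; exact lt_irrefl 0 h2
  have hoc : o ≠ c := fun h => by rw [h] at h3; rw [sig_obo] at h3; exact lt_irrefl 0 h3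
  have hab : a ≠ b := fun h => by rw [h, sig_obb] at h1; exact lt_irrefl 0 h1
  have hbc : b ≠ c := fun h => by rw [h, sig_obb] at h2; exact lt_irrefl 0 h2
  have hac : a ≠ c := fun h => by rw [h, sig_obb] at h3; exact lt_irrefl 0 h3
  rcases lt_trichotomy (sig a b c) 0 with hlt | heq | hgt
  · -- contradiction: b is inside triangle o a c
    exfalso
    set D := sig o a c with hD
    set A := sig o a b with hA
    set B := sig o b c with hB
    have id0 : D = A + B - sig a b c := by rw [hD, hA, hB]; unfold sig; ring
    have idx : D*(b.1-o.1) = B*(a.1-o.1) + A*(c.1-o.1) := by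
      rw [hD, hA, hB]; unfold sig; ring
    have idy : D*(b.2-o.2) = B*(a.2-o.2) + A*(c.2-o.2) := by
      rw [hD, hA, hB]; unfold sig; ring
    have hABD : A + B < D := by rw [id0]; linarith
    have hABpos : 0 < A + B := by positivity
    set γ := (A+B)/D with hγ
    set μ := A/(A+B) with hμ
    have hγ0 : 0 < γ := by positivity
    have hγ1 : γ < 1 := by rw [hγ, div_lt_one h3]; exact hABD
    have hμ0 : 0 ≤ μ := by positivity
    have hμ1 : μ ≤ 1 := by rw [hμ, div_le_one hABpos]; linarith
    have hm : ((1-μ) • a + μ • c : Pt) ∈ convexHull ℝ ((H.erase b : Finset Pt) : Set Pt) :=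
      comb_mem_hull (mem_erase_coe ha hab) (mem_erase_coe hc hbc.symm) hμ0 hμ1
    have hD0 : D ≠ 0 := ne_of_gt h3
    have hAB0 : A + B ≠ 0 := ne_of_gt hABpos
    have hγμ : ∀ x y z : ℝ, (1-γ)*x + γ*((1-μ)*y + μ*z) = x + (B*(y-x) + A*(z-x))/D := by
      intro x y z; rw [hγ, hμ]; field_simp; ring
    have hbeq : b = (1-γ) • o + γ • ((1-μ) • a + μ • c) := by
      apply Prod.ext
      · show b.1 = (1-γ) * o.1 + γ * ((1-μ)*a.1 + μ*c.1)
        rw [hγμ, ← idx, mul_div_cancel_left₀ _ hD0]; ring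
      · show b.2 = (1-γ) * o.2 + γ * ((1-μ)*a.2 + μ*c.2)
        rw [hγμ, ← idy, mul_div_cancel_left₀ _ hD0]; ring
    refine hconv b hb ?_
    have hmem : (1-γ) • o + γ • ((1-μ) • a + μ • c)
        ∈ convexHull ℝ ((H.erase b : Finset Pt) : Set Pt) := by
      refine (convex_convexHull ℝ _) (a := 1-γ) (b := γ)
        (subset_convexHull ℝ _ (mem_erase_coe ho hob)) hm ?_ ?_ ?_
      · linarith
      · linarith
      · ring
    rw [← hbeq] at hmem
    exact hmem
  · exact absurd heq (sig_ne_zero hconv ha hb hc hab hac hbc)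
  · exact hgt

/-- Transitivity of angular order in a lexicographic half-plane. -/
lemma cross_trans {u1 u2 v1 v2 w1 w2 : ℝ}
    (hu : 0 < u1 ∨ (u1 = 0 ∧ 0 < u2)) (hv : 0 < v1 ∨ (v1 = 0 ∧ 0 < v2))
    (hw : 0 < w1 ∨ (w1 = 0 ∧ 0 < w2))
    (huv : 0 < u1*v2 - u2*v1) (hvw : 0 < v1*w2 - v2*w1) : 0 < u1*w2 - u2*w1 := by
  rcases hv with hv1 | ⟨hv1, hv2⟩
  · rcases hu with hu1 | ⟨hu1, hu2⟩
    · rcases hw with hw1 | ⟨hw1, hw2⟩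
      · nlinarith [mul_pos hu1 hvw, mul_pos hw1 huv]
      · rw [hw1]; nlinarith [mul_pos hu1 hw2]
    · exfalso; rw [hu1] at huv; nlinarith [mul_pos hu2 hv1]
  · rcases hw with hw1 | ⟨hw1, hw2⟩
    · exfalso; rw [hv1] at hvw; nlinarith [mul_pos hv2 hw1]
    · exfalso; rw [hv1, hw1] at hvw; linarith

section sorting
variable {α : Type*} [DecidableEq α] (R : α → α → Prop) (T : Finset α)

lemma exists_minR (htot : ∀ a ∈ T, ∀ b ∈ T, a ≠ b → R a b ∨ R b a)
    (htrans : ∀ a ∈ T, ∀ b ∈ T, ∀ c ∈ T, R a b → R b c → R a c) :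
    ∀ S : Finset α, S ⊆ T → S.Nonempty → ∃ a ∈ S, ∀ b ∈ S, b ≠ a → R a b := by
  intro S
  induction S using Finset.induction_on with
  | empty => intro _ h; exact absurd h (by simp)
  | @insert x s hx ih =>
    intro hsub _
    by_cases hs : s.Nonempty
    · obtain ⟨a, haS, hmin⟩ := ih (fun y hy => hsub (Finset.mem_insert_of_mem hy)) hs
      have hxT : x ∈ T := hsub (Finset.mem_insert_self x s)
      have haT : a ∈ T := hsub (Finset.mem_insert_of_mem haS)
      have hxa : x ≠ a := fun h => hx (h ▸ haS)
      rcases htot x hxT a haT hxa with h | h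
      · refine ⟨x, Finset.mem_insert_self x s, ?_⟩
        intro b hb hbx
        rcases Finset.mem_insert.mp hb with rfl | hbs
        · exact absurd rfl hbx
        · by_cases hba : b = a
          · exact hba ▸ h
          · exact htrans x hxT a haT b (hsub (Finset.mem_insert_of_mem hbs)) h (hmin b hbs hba)
      · refine ⟨a, Finset.mem_insert_of_mem haS, ?_⟩
        intro b hb hba
        rcases Finset.mem_insert.mp hb with rfl | hbs
        · exact h
        · exact hmin b hbs hba
    · rw [Finset.not_nonempty_iff_eq_empty] at hs
      subst hs
      refine ⟨x, Finset.mem_insert_self x ∅, ?_⟩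
      intro b hb hbx
      rcases Finset.mem_insert.mp hb with rfl | hbs
      · exact absurd rfl hbx
      · exact absurd hbs (by simp)

lemma exists_sortedR (htot : ∀ a ∈ T, ∀ b ∈ T, a ≠ b → R a b ∨ R b a)
    (htrans : ∀ a ∈ T, ∀ b ∈ T, ∀ c ∈ T, R a b → R b c → R a c) :
    ∀ (n : ℕ) (S : Finset α), S.card = n → S ⊆ T →
      ∃ l : List α, l.Nodup ∧ l.toFinset = S ∧ l.Pairwise R := by
  intro n
  induction n with
  | zero =>
    intro S h0 _
    refine ⟨[], by simp, ?_, by simp⟩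
    simp [Finset.card_eq_zero.mp h0]
  | succ n ih =>
    intro S hcard hsub
    have hne : S.Nonempty := by rw [← Finset.card_pos, hcard]; omega
    obtain ⟨a, haS, hmin⟩ := exists_minR R T htot htrans S hsub hne
    obtain ⟨l, hnd, htf, hpw⟩ := ih (S.erase a)
      (by rw [Finset.card_erase_of_mem haS, hcard]; rfl)
      (fun y hy => hsub (Finset.erase_subset a S hy))
    refine ⟨a :: l, ?_, ?_, ?_⟩
    · refine List.nodup_cons.mpr ⟨fun h => ?_, hnd⟩
      have : a ∈ S.erase a := htf ▸ List.mem_toFinset.mpr h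
      exact (Finset.mem_erase.mp this).1 rfl
    · rw [List.toFinset_cons, htf, Finset.insert_erase haS]
    · refine List.Pairwise.cons (fun b hbl => ?_) hpw
      have hb : b ∈ S.erase a := htf ▸ List.mem_toFinset.mpr hbl
      exact hmin b (Finset.mem_of_mem_erase hb) (Finset.mem_erase.mp hb).1

end sorting

/-- Main structure lemma: a 6-point set in convex position can be labeled so that
all index-increasing triples are positively oriented. -/
lemma exists_order (H : Finset Pt) (hcard : H.card = 6) (hconv : ConvexPos H) :
    ∃ v : Fin 6 → Pt, Function.Injective v ∧ (∀ i, v i ∈ H) ∧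
      ∀ i j k : Fin 6, i < j → j < k → 0 < sig (v i) (v j) (v k) := by
  classical
  have hne : H.Nonempty := by rw [← Finset.card_pos, hcard]; omega
  -- lexicographically minimal point o
  have hne1 : (H.image Prod.fst).Nonempty := hne.image _
  set m1 := (H.image Prod.fst).min' hne1 with hm1
  have hm1mem := (H.image Prod.fst).min'_mem hne1
  rw [Finset.mem_image] at hm1mem
  obtain ⟨p1, hp1H, hp1⟩ := hm1mem
  set H1 := H.filter (fun p => p.1 = m1) with hH1
  have hne2 : (H1.image Prod.snd).Nonempty := by
    refine Finset.Nonempty.image ⟨p1, ?_⟩ _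
    rw [hH1, Finset.mem_filter]; exact ⟨hp1H, hp1⟩
  set m2 := (H1.image Prod.snd).min' hne2 with hm2
  have hm2mem := (H1.image Prod.snd).min'_mem hne2
  rw [Finset.mem_image] at hm2mem
  obtain ⟨o, hoH1, ho2⟩ := hm2mem
  have hoH : o ∈ H := (Finset.mem_filter.mp hoH1).1
  have ho1 : o.1 = m1 := (Finset.mem_filter.mp hoH1).2
  have holex : ∀ w ∈ H, w ≠ o → 0 < w.1 - o.1 ∨ (w.1 - o.1 = 0 ∧ 0 < w.2 - o.2) := by
    intro w hw hwo
    have h1 : m1 ≤ w.1 := Finset.min'_le _ _ (Finset.mem_image_of_mem _ hw)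
    rcases lt_or_eq_of_le h1 with h | h
    · left; rw [ho1]; linarith
    · right
      have hwH1 : w ∈ H1 := by rw [hH1, Finset.mem_filter]; exact ⟨hw, h.symm⟩
      have h2 : m2 ≤ w.2 := Finset.min'_le _ _ (Finset.mem_image_of_mem _ hwH1)
      have hne2' : w.2 ≠ o.2 := by
        intro he
        exact hwo (Prod.ext (by rw [← h, ho1]) he)
      have ho2' : o.2 = m2 := by rw [hm2]; exact ho2
      constructor
      · rw [ho1]; linarith
      · rcases lt_or_eq_of_le h2 with h' | h'
        · linarith
        · exact absurd (by rw [ho2', ← h']) hne2'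
  -- sort the rest around o
  set T := H.erase o with hT
  set R : Pt → Pt → Prop := fun a b => 0 < sig o a b with hR
  have hmemT : ∀ a ∈ T, a ∈ H ∧ a ≠ o := fun a ha =>
    ⟨Finset.mem_of_mem_erase ha, (Finset.mem_erase.mp ha).1⟩
  have hlex : ∀ a ∈ T, 0 < a.1 - o.1 ∨ (a.1 - o.1 = 0 ∧ 0 < a.2 - o.2) := fun a ha =>
    holex a (hmemT a ha).1 (hmemT a ha).2
  have htot : ∀ a ∈ T, ∀ b ∈ T, a ≠ b → R a b ∨ R b a := by
    intro a ha b hb hab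
    obtain ⟨haH, hao⟩ := hmemT a ha
    obtain ⟨hbH, hbo⟩ := hmemT b hb
    have := sig_ne_zero hconv hoH haH hbH (Ne.symm hao) (Ne.symm hbo) hab
    rcases lt_or_gt_of_ne this with h | h
    · right
      rw [hR]
      have : sig o b a = - sig o a b := by unfold sig; ring
      simp only [this]
      linarith
    · left; exact h
  have htrans : ∀ a ∈ T, ∀ b ∈ T, ∀ c ∈ T, R a b → R b c → R a c := by
    intro a ha b hb c hc hab hbc
    have key : 0 < (a.1-o.1)*(c.2-o.2) - (a.2-o.2)*(c.1-o.1) :=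
      cross_trans (hlex a ha) (hlex b hb) (hlex c hc)
        (by rw [hR] at hab; unfold sig at hab; linarith)
        (by rw [hR] at hbc; unfold sig at hbc; linarith)
    rw [hR]; unfold sig; linarith
  have hTcard : T.card = 5 := by rw [hT, Finset.card_erase_of_mem hoH, hcard]
  obtain ⟨l, hnd, htf, hpw⟩ := exists_sortedR R T htot htrans 5 T hTcard (le_refl T)
  have hlen : l.length = 5 := by
    rw [← List.toFinset_card_of_nodup hnd, htf, hTcard]
  -- the labeling
  set w : Fin 5 → Pt := fun m => l.get (Fin.cast hlen.symm m) with hw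
  have hwmem : ∀ m, w m ∈ T := by
    intro m
    rw [← htf]
    exact List.mem_toFinset.mpr (l.get_mem _)
  have hwinj : Function.Injective w := by
    intro m n h
    have := (List.Nodup.get_inj_iff hnd).mp h
    simpa [Fin.ext_iff] using this
  have hwpair : ∀ m n : Fin 5, m < n → 0 < sig o (w m) (w n) := by
    intro m n hmn
    have := (List.pairwise_iff_get.mp hpw) (Fin.cast hlen.symm m) (Fin.cast hlen.symm n)
      (by simpa using hmn)
    exact this
  set v : Fin 6 → Pt := fun i => if h : i = 0 then o else w (i.pred h) with hv
  have hv0 : v 0 = o := by simp [hv]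
  have hvs : ∀ m : Fin 5, v m.succ = w m := by
    intro m
    simp [hv, Fin.succ_ne_zero]
  have hvmem : ∀ i, v i ∈ H := by
    intro i
    by_cases h : i = 0
    · rw [h, hv0]; exact hoH
    · rw [hv]; simp only [h, dite_false]
      exact (hmemT _ (hwmem _)).1
  have hvinj : Function.Injective v := by
    intro i j h
    by_cases hi : i = 0 <;> by_cases hj : j = 0
    · rw [hi, hj]
    · exfalso
      rw [hv] at h; simp only [hi, hj, dite_true, dite_false] at h
      exact (hmemT _ (hwmem (j.pred hj))).2 h.symm
    · exfalso
      rw [hv] at h; simp only [hi, hj, dite_true, dite_false] at h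
      exact (hmemT _ (hwmem (i.pred hi))).2 h
    · rw [hv] at h; simp only [hi, hj, dite_false] at h
      have hpp : i.pred hi = j.pred hj := hwinj h
      have h1 := congrArg Fin.val hpp
      rw [Fin.coe_pred, Fin.coe_pred] at h1
      have h2 : i.val ≠ 0 := by exact fun h => hi (Fin.ext h)
      have h3 : j.val ≠ 0 := by exact fun h => hj (Fin.ext h)
      exact Fin.ext (by omega)
  refine ⟨v, hvinj, hvmem, ?_⟩
  intro i j k hij hjk
  have hij' := Fin.lt_def.mp hij
  have hjk' := Fin.lt_def.mp hjk
  have hj0 : j ≠ 0 := by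
    intro h; rw [h] at hij; exact absurd hij (by simp [Fin.lt_def])
  have hk0 : k ≠ 0 := by
    intro h; rw [h] at hjk; exact absurd hjk (by simp [Fin.lt_def])
  have hj0' : j.val ≠ 0 := by exact fun h => hj0 (Fin.ext h)
  have hk0' : k.val ≠ 0 := by exact fun h => hk0 (Fin.ext h)
  have hvj : v j = w (j.pred hj0) := by simp [hv, hj0]
  have hvk : v k = w (k.pred hk0) := by simp [hv, hk0]
  have hjk2 : j.pred hj0 < k.pred hk0 := by
    rw [Fin.lt_def, Fin.coe_pred, Fin.coe_pred]; omega
  by_cases hi : i = 0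
  · subst hi
    rw [hv0, hvj, hvk]
    exact hwpair _ _ hjk2
  · have hi0' : i.val ≠ 0 := by exact fun h => hi (Fin.ext h)
    have hvi : v i = w (i.pred hi) := by simp [hv, hi]
    have hij2 : i.pred hi < j.pred hj0 := by
      rw [Fin.lt_def, Fin.coe_pred, Fin.coe_pred]; omega
    have hik2 : i.pred hi < k.pred hk0 := by
      rw [Fin.lt_def, Fin.coe_pred, Fin.coe_pred]; omega
    rw [hvi, hvj, hvk]
    exact sig_pos_of_chain hconv hoH (hmemT _ (hwmem _)).1 (hmemT _ (hwmem _)).1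
      (hmemT _ (hwmem _)).1 (hwpair _ _ hij2) (hwpair _ _ hjk2) (hwpair _ _ hik2)

def allP : Finset (Fin 6 × Fin 6) := Finset.univ.filter (fun e => e.1 < e.2)
def Edg : Finset (Fin 6 × Fin 6) := {(0,1),(1,2),(2,3),(3,4),(4,5),(0,5)}
def Dia : Finset (Fin 6 × Fin 6) := allP \ Edg
def crossP (e f : Fin 6 × Fin 6) : Prop :=
  (e.1 < f.1 ∧ f.1 < e.2) ↔ ¬(e.1 < f.2 ∧ f.2 < e.2)
def disjP (e f : Fin 6 × Fin 6) : Prop :=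
  e.1 ≠ f.1 ∧ e.1 ≠ f.2 ∧ e.2 ≠ f.1 ∧ e.2 ≠ f.2
instance (e f : Fin 6 × Fin 6) : Decidable (crossP e f) := by unfold crossP; infer_instance
instance (e f : Fin 6 × Fin 6) : Decidable (disjP e f) := by unfold disjP; infer_instance
lemma hEsub : Edg ⊆ allP := by decide
lemma hEcard : Edg.card = 6 := by decide
lemma hDcard : Dia.card = 9 := by decide
lemma hDsub : Dia ⊆ allP := by decide
set_option maxHeartbeats 1000000 in
lemma hmatch : ∀ d1 d2 d3 : Fin 6 × Fin 6,
    (d1 ∈ allP ∧ d2 ∈ allP ∧ d3 ∈ allP ∧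
     disjP d1 d2 ∧ disjP d1 d3 ∧ disjP d2 d3 ∧
     crossP d1 d2 ∧ crossP d2 d1 ∧ crossP d1 d3 ∧ crossP d3 d1 ∧ crossP d2 d3 ∧ crossP d3 d2) →
    ((d1 = (0,3) ∨ d2 = (0,3) ∨ d3 = (0,3)) ∧ (d1 = (1,4) ∨ d2 = (1,4) ∨ d3 = (1,4))) := by
  decide
lemma hedgeiff : ∀ e ∈ Edg, ∀ m : Fin 6, m ≠ e.1 → m ≠ e.2 →
    ((e.1 < m ∧ m < e.2) ↔ e = ((0 : Fin 6), (5 : Fin 6))) := by decide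
lemma mem_allP {e : Fin 6 × Fin 6} : e ∈ allP ↔ e.1 < e.2 := by
  rw [allP, Finset.mem_filter]; simp

theorem stmt6 (H X : Finset Pt) (hcard : H.card = 6) (hconv : ConvexPos H)
    (hblock : ∀ u ∈ H, ∀ v ∈ H, u ≠ v → ∃ p ∈ X, p ∈ openSegment ℝ u v) :
    10 ≤ X.card := by
  classical
  obtain ⟨v, hvinj, hvmem, hOr⟩ := exists_order H hcard hconv
  set Seg : Fin 6 × Fin 6 → Set Pt := fun e => openSegment ℝ (v e.1) (v e.2) with hSeg
  have hne3 : ∀ a b c : Fin 6, a ≠ b → a ≠ c → b ≠ c → sig (v a) (v b) (v c) ≠ 0 :=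
    fun a b c hab hac hbc =>
      sig_ne_zero hconv (hvmem a) (hvmem b) (hvmem c)
        (fun h => hab (hvinj h)) (fun h => hac (hvinj h)) (fun h => hbc (hvinj h))
  have hsgn_neg : ∀ i j m : Fin 6, i < m → m < j → sig (v i) (v j) (v m) < 0 := by
    intro i j m him hmj
    have h := hOr i m j him hmj
    rw [sig_swap (v i) (v m) (v j)] at h
    linarith
  have hsgn_pos : ∀ i j m : Fin 6, i < j → (m < i ∨ j < m) → 0 < sig (v i) (v j) (v m) := by
    intro i j m hij hm
    rcases hm with h | h
    · have := hOr m i j h hij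
      rwa [sig_cycle (v m) (v i) (v j)] at this
    · exact hOr i j m hij h
  have hbet : ∀ i j m : Fin 6, i < j → m ≠ i → m ≠ j →
      ((i < m ∧ m < j) ↔ sig (v i) (v j) (v m) < 0) := by
    intro i j m hij hmi hmj
    constructor
    · intro ⟨h1, h2⟩; exact hsgn_neg i j m h1 h2
    · intro h
      by_contra hc
      have hm : m < i ∨ j < m := by
        rw [not_and_or] at hc
        rcases hc with hc | hc
        · rcases lt_trichotomy m i with h' | h' | h'
          · exact Or.inl h'
          · exact absurd h' hmi
          · exact absurd h' hc
        · rcases lt_trichotomy m j with h' | h' | h'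
          · exact absurd h' hc
          · exact absurd h' hmj
          · exact Or.inr h'
      linarith [hsgn_pos i j m hij hm]
  -- distinct pairs whose open segments meet share no index
  have hshare : ∀ e ∈ allP, ∀ f ∈ allP, e ≠ f → ∀ p : Pt, p ∈ Seg e → p ∈ Seg f →
      disjP e f := by
    intro e he f hf hef p hpe hpf
    rw [mem_allP] at he hf
    have hpe' : p ∈ openSegment ℝ (v e.1) (v e.2) := hpe
    have hpf' : p ∈ openSegment ℝ (v f.1) (v f.2) := hpf
    refine ⟨?_, ?_, ?_, ?_⟩
    · intro h
      have h22 : e.2 ≠ f.2 := fun h2 => hef (Prod.ext h h2)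
      have hz : sig (v e.1) (v e.2) (v f.2) = 0 :=
        sig_zero_of_common hpe' (by rw [h]; exact hpf')
      exact hne3 e.1 e.2 f.2 (fun h' => absurd h' (ne_of_lt he))
        (by rw [h]; exact fun h' => absurd h' (ne_of_lt hf)) h22 hz
    · intro h
      have h21 : e.2 ≠ f.1 := by
        intro h2
        rw [← h2] at hf
        rw [h] at he
        exact absurd he (lt_asymm hf)
      have hz : sig (v e.1) (v e.2) (v f.1) = 0 :=
        sig_zero_of_common hpe' (by rw [h, openSegment_symm]; exact hpf')
      exact hne3 e.1 e.2 f.1 (fun h' => absurd h' (ne_of_lt he))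
        (by rw [h]; exact fun h' => absurd h'.symm (ne_of_lt hf)) h21 hz
    · intro h
      have h12 : e.1 ≠ f.2 := by
        intro h2
        rw [h2] at he
        rw [← h] at hf
        exact absurd he (lt_asymm hf)
      have hz : sig (v e.2) (v e.1) (v f.2) = 0 :=
        sig_zero_of_common (by rw [openSegment_symm]; exact hpe') (by rw [h]; exact hpf')
      exact hne3 e.2 e.1 f.2 (fun h' => absurd h'.symm (ne_of_lt he))
        (by rw [h]; exact fun h' => absurd h' (ne_of_lt hf)) h12 hz
    · intro h
      have h11 : e.1 ≠ f.1 := fun h2 => hef (Prod.ext h2 h)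
      have hz : sig (v e.2) (v e.1) (v f.1) = 0 :=
        sig_zero_of_common (by rw [openSegment_symm]; exact hpe')
          (by rw [h, openSegment_symm]; exact hpf')
      exact hne3 e.2 e.1 f.1 (fun h' => absurd h'.symm (ne_of_lt he))
        (by rw [h]; exact fun h' => absurd h'.symm (ne_of_lt hf)) h11 hz
  -- crossing characterization for segments meeting at a point
  have hcross : ∀ e ∈ allP, ∀ f ∈ allP, disjP e f → ∀ p : Pt, p ∈ Seg e → p ∈ Seg f →
      crossP e f := by
    intro e he f hf hd p hpe hpf
    rw [mem_allP] at he hf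
    obtain ⟨h11, h12, h21, h22⟩ := hd
    have hne1 := hne3 e.1 e.2 f.1 (ne_of_lt he) h11 h21
    have hne2 := hne3 e.1 e.2 f.2 (ne_of_lt he) h12 h22
    have hprod : sig (v e.1) (v e.2) (v f.1) * sig (v e.1) (v e.2) (v f.2) < 0 :=
      opp_sides hpe hpf hne1
    have hb1 := hbet e.1 e.2 f.1 he (Ne.symm h11) (Ne.symm h21)
    have hb2 := hbet e.1 e.2 f.2 he (Ne.symm h12) (Ne.symm h22)
    constructor
    · intro h
      have hneg := hb1.mp h
      have hpos : 0 < sig (v e.1) (v e.2) (v f.2) := by nlinarith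
      intro hcon
      linarith [hb2.mp hcon]
    · intro h
      have hnneg : ¬ sig (v e.1) (v e.2) (v f.2) < 0 := fun hlt => h (hb2.mpr hlt)
      have hpos : 0 < sig (v e.1) (v e.2) (v f.2) :=
        lt_of_le_of_ne (not_lt.mp hnneg) (Ne.symm hne2)
      have hneg : sig (v e.1) (v e.2) (v f.1) < 0 := by nlinarith
      exact hb1.mpr hneg
  -- choose blockers
  have hblock' : ∀ e : Fin 6 × Fin 6, ∃ p : Pt, e ∈ allP → p ∈ X ∧ p ∈ Seg e := by
    intro e
    by_cases he : e ∈ allP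
    · rw [mem_allP] at he
      obtain ⟨p, hpX, hpS⟩ := hblock (v e.1) (hvmem _) (v e.2) (hvmem _)
        (fun h => absurd (hvinj h) (ne_of_lt he))
      exact ⟨p, fun _ => ⟨hpX, hpS⟩⟩
    · exact ⟨(0, 0), fun h => absurd h he⟩
  choose b hb using hblock'
  have hbX : ∀ e ∈ allP, b e ∈ X := fun e he => (hb e he).1
  have hbS : ∀ e ∈ allP, b e ∈ Seg e := fun e he => (hb e he).2
  -- a blocker of an edge lies on no other segment
  have hedgeexcl : ∀ e ∈ Edg, ∀ f ∈ allP, e ≠ f → ∀ p : Pt, p ∈ Seg e → p ∈ Seg f → False := by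
    intro e heE f hf hef p hpe hpf
    have heP := hEsub heE
    obtain ⟨h11, h12, h21, h22⟩ := hshare e heP f hf hef p hpe hpf
    have he2 := mem_allP.mp heP
    have hne1 := hne3 e.1 e.2 f.1 (ne_of_lt he2) h11 h21
    have hprod : sig (v e.1) (v e.2) (v f.1) * sig (v e.1) (v e.2) (v f.2) < 0 :=
      opp_sides hpe hpf hne1
    have hiff1 := hedgeiff e heE f.1 (Ne.symm h11) (Ne.symm h21)
    have hiff2 := hedgeiff e heE f.2 (Ne.symm h12) (Ne.symm h22)
    by_cases h05 : e = ((0 : Fin 6), (5 : Fin 6))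
    · have hc1 := hiff1.mpr h05
      have hc2 := hiff2.mpr h05
      have n1 := hsgn_neg e.1 e.2 f.1 hc1.1 hc1.2
      have n2 := hsgn_neg e.1 e.2 f.2 hc2.1 hc2.2
      nlinarith
    · have hp1 : 0 < sig (v e.1) (v e.2) (v f.1) := by
        rcases lt_trichotomy (sig (v e.1) (v e.2) (v f.1)) 0 with h | h | h
        · exact absurd (hiff1.mp ((hbet e.1 e.2 f.1 he2 (Ne.symm h11) (Ne.symm h21)).mpr h)) h05
        · exact absurd h hne1
        · exact h
      have hp2 : 0 < sig (v e.1) (v e.2) (v f.2) := by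
        rcases lt_trichotomy (sig (v e.1) (v e.2) (v f.2)) 0 with h | h | h
        · exact absurd (hiff2.mp ((hbet e.1 e.2 f.2 he2 (Ne.symm h12) (Ne.symm h22)).mpr h)) h05
        · exact absurd h (hne3 e.1 e.2 f.2 (ne_of_lt he2) h12 h22)
        · exact h
      nlinarith
  -- the images
  set EP := Edg.image b with hEP
  set DP := Dia.image b with hDP
  have hEPcard : EP.card = 6 := by
    rw [hEP, Finset.card_image_of_injOn, hEcard]
    intro e he e' he' hbe
    by_contra hne
    exact hedgeexcl e he e' (hEsub he') hne (b e) (hbS e (hEsub he))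
      (hbe ▸ hbS e' (hEsub he'))
  have hdisjED : Disjoint EP DP := by
    rw [Finset.disjoint_left]
    intro q hqE hqD
    rw [hEP, Finset.mem_image] at hqE
    rw [hDP, Finset.mem_image] at hqD
    obtain ⟨e, he, hbe⟩ := hqE
    obtain ⟨d, hd, hbd⟩ := hqD
    have hed : e ≠ d := by
      intro h
      rw [Dia, Finset.mem_sdiff] at hd
      exact hd.2 (h ▸ he)
    exact hedgeexcl e he d (hDsub hd) hed q (hbe ▸ hbS e (hEsub he)) (hbd ▸ hbS d (hDsub hd))
  -- fibers over diagonal blockers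
  set fib : Pt → Finset (Fin 6 × Fin 6) := fun q => Dia.filter (fun d => b d = q) with hfib
  have hfibmem : ∀ q : Pt, ∀ d ∈ fib q, q ∈ Seg d := by
    intro q d hd
    rw [hfib, Finset.mem_filter] at hd
    exact hd.2 ▸ hbS d (hDsub hd.1)
  have hfibDia : ∀ q : Pt, ∀ d ∈ fib q, d ∈ Dia := by
    intro q d hd; rw [hfib, Finset.mem_filter] at hd; exact hd.1
  have hfib3 : ∀ q : Pt, (fib q).card ≤ 3 := by
    intro q
    have hdisj : ∀ d ∈ fib q, ∀ d' ∈ fib q, d ≠ d' →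
        Disjoint ({d.1, d.2} : Finset (Fin 6)) {d'.1, d'.2} := by
      intro d hd d' hd' hne
      obtain ⟨h11, h12, h21, h22⟩ := hshare d (hDsub (hfibDia q d hd)) d'
        (hDsub (hfibDia q d' hd')) hne q (hfibmem q d hd) (hfibmem q d' hd')
      rw [Finset.disjoint_left]
      intro x hx hx'
      simp only [Finset.mem_insert, Finset.mem_singleton] at hx hx'
      rcases hx with rfl | rfl <;> rcases hx' with h | h
      · exact h11 h
      · exact h12 h
      · exact h21 h
      · exact h22 h
    have hcb := Finset.card_biUnion hdisj
    have hsum2 : ∑ d ∈ fib q, ({d.1, d.2} : Finset (Fin 6)).card = 2 * (fib q).card := by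
      rw [Finset.sum_congr rfl (fun d hd => Finset.card_pair
        (ne_of_lt (mem_allP.mp (hDsub (hfibDia q d hd)))))]
      rw [Finset.sum_const, smul_eq_mul, mul_comm]
    have hle : ((fib q).biUnion (fun d => ({d.1, d.2} : Finset (Fin 6)))).card ≤ 6 := by
      have h := Finset.card_le_univ ((fib q).biUnion (fun d => ({d.1, d.2} : Finset (Fin 6))))
      simpa using h
    omega
  -- triple points lie on both main diagonals (0,3) and (1,4)
  have hTriple : ∀ q : Pt, 3 ≤ (fib q).card →
      q ∈ Seg ((0 : Fin 6), (3 : Fin 6)) ∧ q ∈ Seg ((1 : Fin 6), (4 : Fin 6)) := by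
    intro q hq
    obtain ⟨t, hts, htc⟩ := Finset.exists_subset_card_eq hq
    obtain ⟨d1, d2, d3, h12, h13, h23, rfl⟩ := Finset.card_eq_three.mp htc
    have m1 : d1 ∈ fib q := hts (by simp)
    have m2 : d2 ∈ fib q := hts (by simp)
    have m3 : d3 ∈ fib q := hts (by simp)
    have P1 : d1 ∈ allP := hDsub (hfibDia q d1 m1)
    have P2 : d2 ∈ allP := hDsub (hfibDia q d2 m2)
    have P3 : d3 ∈ allP := hDsub (hfibDia q d3 m3)
    have s1 := hfibmem q d1 m1
    have s2 := hfibmem q d2 m2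
    have s3 := hfibmem q d3 m3
    have dj12 := hshare d1 P1 d2 P2 h12 q s1 s2
    have dj13 := hshare d1 P1 d3 P3 h13 q s1 s3
    have dj23 := hshare d2 P2 d3 P3 h23 q s2 s3
    have dj21 := hshare d2 P2 d1 P1 (Ne.symm h12) q s2 s1
    have dj31 := hshare d3 P3 d1 P1 (Ne.symm h13) q s3 s1
    have dj32 := hshare d3 P3 d2 P2 (Ne.symm h23) q s3 s2
    have key := hmatch d1 d2 d3 ⟨P1, P2, P3, dj12, dj13, dj23,
      hcross d1 P1 d2 P2 dj12 q s1 s2, hcross d2 P2 d1 P1 dj21 q s2 s1,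
      hcross d1 P1 d3 P3 dj13 q s1 s3, hcross d3 P3 d1 P1 dj31 q s3 s1,
      hcross d2 P2 d3 P3 dj23 q s2 s3, hcross d3 P3 d2 P2 dj32 q s3 s2⟩
    obtain ⟨hA, hB⟩ := key
    constructor
    · rcases hA with h | h | h
      · exact h ▸ s1
      · exact h ▸ s2
      · exact h ▸ s3
    · rcases hB with h | h | h
      · exact h ▸ s1
      · exact h ▸ s2
      · exact h ▸ s3
  have huniq : ∀ q q' : Pt, 3 ≤ (fib q).card → 3 ≤ (fib q').card → q = q' := by
    intro q q' h3 h3'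
    by_contra hne
    obtain ⟨hq03, hq14⟩ := hTriple q h3
    obtain ⟨hq03', hq14'⟩ := hTriple q' h3'
    have hq14s : q ∈ openSegment ℝ (v 1) (v 4) := hq14
    have hq14s' : q' ∈ openSegment ℝ (v 1) (v 4) := hq14'
    obtain ⟨t, ht0, ht1, hqe⟩ := mem_open_iff.mp hq14s
    obtain ⟨t', ht0', ht1', hqe'⟩ := mem_open_iff.mp hq14s'
    have e1 : sig (v 0) (v 3) q = 0 := sig_of_mem hq03
    have e2 : sig (v 0) (v 3) q' = 0 := sig_of_mem hq03'
    rw [hqe, sig_affine] at e1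
    rw [hqe', sig_affine] at e2
    have htt : t ≠ t' := by
      intro h; apply hne; rw [hqe, hqe', h]
    have hz : (t - t') * (sig (v 0) (v 3) (v 4) - sig (v 0) (v 3) (v 1)) = 0 := by
      linear_combination e1 - e2
    have hSeq : sig (v 0) (v 3) (v 1) = sig (v 0) (v 3) (v 4) := by
      rcases mul_eq_zero.mp hz with h | h
      · exact absurd (by linarith) htt
      · linarith
    have hneg := hsgn_neg 0 3 1 (by decide) (by decide)
    have hpos := hsgn_pos 0 3 4 (by decide) (Or.inr (by decide))
    linarith
  -- counting diagonal blockers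
  have hfibsum : Dia.card = ∑ q ∈ DP, (fib q).card := by
    rw [hDP, hfib]
    exact Finset.card_eq_sum_card_fiberwise (fun d hd => Finset.mem_image_of_mem b hd)
  set T := DP.filter (fun q => 3 ≤ (fib q).card) with hT
  have hTcard : T.card ≤ 1 := by
    rw [Finset.card_le_one]
    intro q hq q' hq'
    rw [hT, Finset.mem_filter] at hq hq'
    exact huniq q q' hq.2 hq'.2
  have hbound : ∑ q ∈ DP, (fib q).card ≤ 2 * DP.card + T.card := by
    calc ∑ q ∈ DP, (fib q).card
        ≤ ∑ q ∈ DP, (2 + if 3 ≤ (fib q).card then 1 else 0) := by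
          apply Finset.sum_le_sum
          intro q hq
          split_ifs with h
          · have := hfib3 q; omega
          · omega
      _ = 2 * DP.card + T.card := by
          rw [Finset.sum_add_distrib, Finset.sum_const, smul_eq_mul, mul_comm, hT,
            Finset.card_filter]
  have hDP4 : 4 ≤ DP.card := by
    have h9 : (9 : ℕ) = ∑ q ∈ DP, (fib q).card := by rw [← hfibsum, hDcard]
    omega
  have hsubX : EP ∪ DP ⊆ X := by
    intro q hq
    rcases Finset.mem_union.mp hq with h | h
    · rw [hEP, Finset.mem_image] at h
      obtain ⟨e, he, rfl⟩ := h
      exact hbX e (hEsub he)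
    · rw [hDP, Finset.mem_image] at h
      obtain ⟨e, he, rfl⟩ := h
      exact hbX e (hDsub he)
  have hcardU : (EP ∪ DP).card = EP.card + DP.card := Finset.card_union_of_disjoint hdisjED
  have := Finset.card_le_card hsubX
  omega
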